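/- arXiv:2410.09118 — 2 statements merged into one kernel-verified Lean document; each statement's English description precedes it below -/
import Mathlib

section
/- The graph pseudo-metric d satisfies the triangle inequality: for any three featured graphs (A,X), (B,Y), (C,Z) on n vertices with features in ℝ^d, d((A,X),(C,Z)) ≤ d((A,X),(B,Y)) + d((B,Y),(C,Z)). -/
/-- A featured graph on `n` vertices: an adjacency matrix of a simple graph
(symmetric, 0/1 entries, zero diagonal) together with node features in `ℝ^d`. -/
structure FeaturedGraph (n d : ℕ) where
  A : Matrix (Fin n) (Fin n) ℝ
  X : Fin n → EuclideanSpace ℝ (Fin d)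
  isSymm : A.IsSymm
  zeroOne : ∀ i j, A i j = 0 ∨ A i j = 1
  loopless : ∀ i, A i i = 0

/-- The ℓ² operator norm of a square real matrix. -/
noncomputable def l2OpNorm {n : ℕ} (M : Matrix (Fin n) (Fin n) ℝ) : ℝ :=
  ‖Matrix.toEuclideanCLM (𝕜 := ℝ) M‖

/-- The graph pseudo-metric: the infimum over doubly stochastic `S` of
`‖A·S − S·B‖ + Σ_{i,j} S_{i,j} ‖X_i − Y_j‖`. -/
noncomputable def graphDist {n d : ℕ} (G H : FeaturedGraph n d) : ℝ :=
  sInf {r | ∃ S ∈ doublyStochastic ℝ (Fin n),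
    r = l2OpNorm (G.A * S - S * H.A) + ∑ i, ∑ j, S i j * ‖G.X i - H.X j‖}

open Finset Matrix

lemma l2OpNorm_ds_le_one {n : ℕ} {S : Matrix (Fin n) (Fin n) ℝ}
    (hS : S ∈ doublyStochastic ℝ (Fin n)) : l2OpNorm S ≤ 1 := by
  apply ContinuousLinearMap.opNorm_le_bound _ zero_le_one
  intro x
  rw [one_mul]
  have hx : ∀ i, (Matrix.toEuclideanCLM (𝕜 := ℝ) S x) i = S.mulVec (fun j => x j) i := by
    intro i
    have := Matrix.ofLp_toEuclideanCLM (n := Fin n) (𝕜 := ℝ) S x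
    exact congrFun this i
  rw [EuclideanSpace.norm_eq, EuclideanSpace.norm_eq]
  apply Real.sqrt_le_sqrt
  have key : ∀ i, ‖(Matrix.toEuclideanCLM (𝕜 := ℝ) S x) i‖ ^ 2 ≤ ∑ j, S i j * ‖x j‖ ^ 2 := by
    intro i
    rw [hx i, Real.norm_eq_abs, sq_abs, Matrix.mulVec, dotProduct]
    have cs := Finset.sum_mul_sq_le_sq_mul_sq Finset.univ
      (fun j => Real.sqrt (S i j)) (fun j => Real.sqrt (S i j) * x j)
    have e1 : ∀ j, Real.sqrt (S i j) * (Real.sqrt (S i j) * x j) = S i j * x j := by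
      intro j
      rw [← mul_assoc, Real.mul_self_sqrt (nonneg_of_mem_doublyStochastic hS)]
    have e2 : ∀ j, Real.sqrt (S i j) ^ 2 = S i j := fun j =>
      Real.sq_sqrt (nonneg_of_mem_doublyStochastic hS)
    simp only [e1, e2, mul_pow] at cs
    calc (∑ j, S i j * x j) ^ 2 ≤ (∑ j, S i j) * ∑ j, S i j * x j ^ 2 := cs
      _ = ∑ j, S i j * ‖x j‖ ^ 2 := by
          rw [sum_row_of_mem_doublyStochastic hS, one_mul]
          simp [Real.norm_eq_abs, sq_abs]
  calc ∑ i, ‖(Matrix.toEuclideanCLM (𝕜 := ℝ) S x) i‖ ^ 2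
      ≤ ∑ i, ∑ j, S i j * ‖x j‖ ^ 2 := Finset.sum_le_sum fun i _ => key i
    _ = ∑ j, (∑ i, S i j) * ‖x j‖ ^ 2 := by rw [Finset.sum_comm]; simp [Finset.sum_mul]
    _ = ∑ j, ‖x j‖ ^ 2 := by
        simp [sum_col_of_mem_doublyStochastic hS]

lemma l2OpNorm_mul_le {n : ℕ} (M N : Matrix (Fin n) (Fin n) ℝ) :
    l2OpNorm (M * N) ≤ l2OpNorm M * l2OpNorm N := by
  simp only [l2OpNorm, _root_.map_mul]
  exact norm_mul_le _ _

lemma l2OpNorm_add_le {n : ℕ} (M N : Matrix (Fin n) (Fin n) ℝ) :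
    l2OpNorm (M + N) ≤ l2OpNorm M + l2OpNorm N := by
  simp only [l2OpNorm, map_add]
  exact norm_add_le _ _

lemma l2OpNorm_nonneg {n : ℕ} (M : Matrix (Fin n) (Fin n) ℝ) : 0 ≤ l2OpNorm M :=
  norm_nonneg _

/-- The graph pseudo-metric satisfies the triangle inequality. -/
theorem graphDist_triangle {n d : ℕ} (G H K : FeaturedGraph n d) :
    graphDist G K ≤ graphDist G H + graphDist H K := by
  classical
  set sGH : Set ℝ := {r | ∃ S ∈ doublyStochastic ℝ (Fin n),
    r = l2OpNorm (G.A * S - S * H.A) + ∑ i, ∑ j, S i j * ‖G.X i - H.X j‖} with hsGH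
  set sHK : Set ℝ := {r | ∃ S ∈ doublyStochastic ℝ (Fin n),
    r = l2OpNorm (H.A * S - S * K.A) + ∑ i, ∑ j, S i j * ‖H.X i - K.X j‖} with hsHK
  set sGK : Set ℝ := {r | ∃ S ∈ doublyStochastic ℝ (Fin n),
    r = l2OpNorm (G.A * S - S * K.A) + ∑ i, ∑ j, S i j * ‖G.X i - K.X j‖} with hsGK
  have bddGK : BddBelow sGK := by
    refine ⟨0, fun r hr => ?_⟩
    obtain ⟨S, hS, rfl⟩ := hr
    have h1 : (0:ℝ) ≤ ∑ i, ∑ j, S i j * ‖G.X i - K.X j‖ :=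
      Finset.sum_nonneg fun i _ => Finset.sum_nonneg fun j _ =>
        mul_nonneg (nonneg_of_mem_doublyStochastic hS) (norm_nonneg _)
    have := l2OpNorm_nonneg (G.A * S - S * K.A)
    linarith
  have neGH : sGH.Nonempty := ⟨_, 1, one_mem _, rfl⟩
  have neHK : sHK.Nonempty := ⟨_, 1, one_mem _, rfl⟩
  -- main estimate
  have main : ∀ a ∈ sGH, ∀ b ∈ sHK, graphDist G K ≤ a + b := by
    rintro a ⟨S, hS, rfl⟩ b ⟨T, hT, rfl⟩
    have hST : S * T ∈ doublyStochastic ℝ (Fin n) := mul_mem hS hT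
    have hmem : l2OpNorm (G.A * (S * T) - (S * T) * K.A) +
        ∑ i, ∑ j, (S * T) i j * ‖G.X i - K.X j‖ ∈ sGK := ⟨S * T, hST, rfl⟩
    have step1 : graphDist G K ≤ l2OpNorm (G.A * (S * T) - (S * T) * K.A) +
        ∑ i, ∑ j, (S * T) i j * ‖G.X i - K.X j‖ := csInf_le bddGK hmem
    -- operator norm part
    have hid : G.A * (S * T) - (S * T) * K.A =
        (G.A * S - S * H.A) * T + S * (H.A * T - T * K.A) := by
      noncomm_ring
    have normle : l2OpNorm (G.A * (S * T) - (S * T) * K.A) ≤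
        l2OpNorm (G.A * S - S * H.A) + l2OpNorm (H.A * T - T * K.A) := by
      rw [hid]
      calc l2OpNorm ((G.A * S - S * H.A) * T + S * (H.A * T - T * K.A))
          ≤ l2OpNorm ((G.A * S - S * H.A) * T) + l2OpNorm (S * (H.A * T - T * K.A)) :=
            l2OpNorm_add_le _ _
        _ ≤ l2OpNorm (G.A * S - S * H.A) * l2OpNorm T +
            l2OpNorm S * l2OpNorm (H.A * T - T * K.A) :=
            add_le_add (l2OpNorm_mul_le _ _) (l2OpNorm_mul_le _ _)
        _ ≤ l2OpNorm (G.A * S - S * H.A) * 1 + 1 * l2OpNorm (H.A * T - T * K.A) :=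
            add_le_add
              (mul_le_mul_of_nonneg_left (l2OpNorm_ds_le_one hT) (l2OpNorm_nonneg _))
              (mul_le_mul_of_nonneg_right (l2OpNorm_ds_le_one hS) (l2OpNorm_nonneg _))
        _ = l2OpNorm (G.A * S - S * H.A) + l2OpNorm (H.A * T - T * K.A) := by ring
    -- feature part
    have sumle : ∑ i, ∑ k, (S * T) i k * ‖G.X i - K.X k‖ ≤
        (∑ i, ∑ j, S i j * ‖G.X i - H.X j‖) + ∑ j, ∑ k, T j k * ‖H.X j - K.X k‖ := by
      have expand : ∑ i, ∑ k, (S * T) i k * ‖G.X i - K.X k‖ =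
          ∑ i, ∑ k, ∑ j, S i j * T j k * ‖G.X i - K.X k‖ := by
        simp [Matrix.mul_apply, Finset.sum_mul]
      rw [expand]
      have tri : ∀ (i : Fin n) (k : Fin n) (j : Fin n),
          S i j * T j k * ‖G.X i - K.X k‖ ≤
          S i j * T j k * ‖G.X i - H.X j‖ + S i j * T j k * ‖H.X j - K.X k‖ := by
        intro i k j
        rw [← mul_add]
        exact mul_le_mul_of_nonneg_left (norm_sub_le_norm_sub_add_norm_sub _ _ _)
          (mul_nonneg (nonneg_of_mem_doublyStochastic hS) (nonneg_of_mem_doublyStochastic hT))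
      calc ∑ i, ∑ k, ∑ j, S i j * T j k * ‖G.X i - K.X k‖
          ≤ ∑ i, ∑ k, ∑ j, (S i j * T j k * ‖G.X i - H.X j‖ +
              S i j * T j k * ‖H.X j - K.X k‖) :=
            Finset.sum_le_sum fun i _ => Finset.sum_le_sum fun k _ =>
              Finset.sum_le_sum fun j _ => tri i k j
        _ = (∑ i, ∑ k, ∑ j, S i j * T j k * ‖G.X i - H.X j‖) +
            ∑ i, ∑ k, ∑ j, S i j * T j k * ‖H.X j - K.X k‖ := by
            simp [Finset.sum_add_distrib]
        _ = (∑ i, ∑ j, S i j * ‖G.X i - H.X j‖) + ∑ j, ∑ k, T j k * ‖H.X j - K.X k‖ := by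
            congr 1
            · -- sum over k of T j k is 1
              have : ∀ i, ∑ k, ∑ j, S i j * T j k * ‖G.X i - H.X j‖ =
                  ∑ j, S i j * ‖G.X i - H.X j‖ := by
                intro i
                rw [Finset.sum_comm]
                refine Finset.sum_congr rfl fun j _ => ?_
                have : ∑ k, S i j * T j k * ‖G.X i - H.X j‖ =
                    S i j * ‖G.X i - H.X j‖ * ∑ k, T j k := by
                  rw [Finset.mul_sum]
                  exact Finset.sum_congr rfl fun k _ => by ring
                rw [this, sum_row_of_mem_doublyStochastic hT, mul_one]
              exact Finset.sum_congr rfl fun i _ => this i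
            · -- sum over i of S i j is 1
              have h2' : ∑ i, ∑ k, ∑ j, S i j * T j k * ‖H.X j - K.X k‖ =
                  ∑ k, ∑ j, T j k * ‖H.X j - K.X k‖ := by
                rw [Finset.sum_comm]
                refine Finset.sum_congr rfl fun k _ => ?_
                rw [Finset.sum_comm]
                refine Finset.sum_congr rfl fun j _ => ?_
                have : ∑ i, S i j * T j k * ‖H.X j - K.X k‖ =
                    (∑ i, S i j) * (T j k * ‖H.X j - K.X k‖) := by
                  rw [Finset.sum_mul]
                  exact Finset.sum_congr rfl fun i _ => by ring
                rw [this, sum_col_of_mem_doublyStochastic hS, one_mul]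
              rw [h2', Finset.sum_comm]
    calc graphDist G K ≤ l2OpNorm (G.A * (S * T) - (S * T) * K.A) +
          ∑ i, ∑ k, (S * T) i k * ‖G.X i - K.X k‖ := step1
      _ ≤ (l2OpNorm (G.A * S - S * H.A) + l2OpNorm (H.A * T - T * K.A)) +
          ((∑ i, ∑ j, S i j * ‖G.X i - H.X j‖) + ∑ j, ∑ k, T j k * ‖H.X j - K.X k‖) :=
          add_le_add normle sumle
      _ = (l2OpNorm (G.A * S - S * H.A) + ∑ i, ∑ j, S i j * ‖G.X i - H.X j‖) +
          (l2OpNorm (H.A * T - T * K.A) + ∑ j, ∑ k, T j k * ‖H.X j - K.X k‖) := by ring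
  have hGH : graphDist G H = sInf sGH := rfl
  have hHK : graphDist H K = sInf sHK := rfl
  have h1 : ∀ b ∈ sHK, graphDist G K - b ≤ graphDist G H := by
    intro b hb
    rw [hGH]
    exact le_csInf neGH fun a ha => sub_le_iff_le_add.2 (main a ha b hb)
  have h2 : graphDist G K - graphDist G H ≤ graphDist H K := by
    rw [hHK]
    exact le_csInf neHK fun b hb => sub_le_comm.1 (h1 b hb)
  linarith
end

section
/- Two featured graphs (A,X) and (B,Y), each on n vertices with features in ℝ^d, are 1-WL equivalent if and only if they admit a common stable partition: there exist a stable partition P₁,…,P_k of (A,X) and a stable partition Q₁,…,Q_k of (B,Y) such that |P_t| = |Q_t| for all t, all vertices in P_t ∪ Q_t have the same feature vector, and for all t, l, every u ∈ P_t and v ∈ Q_t satisfy |N_G(u) ∩ P_l| = |N_H(v) ∩ Q_l| (G, H the underlying simple graphs). -/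
open Classical in
/-- The neighbor set of `u` in the simple graph with adjacency matrix `A`. -/
noncomputable def nbrs {n : ℕ} (A : Matrix (Fin n) (Fin n) ℝ) (u : Fin n) : Finset (Fin n) :=
  Finset.univ.filter fun z => A u z = 1

open Classical in
/-- The color refinement (1-WL) sequence of relations, for a vertex type `V` with
neighbor sets `N` and features `X`: `r 0 u v ↔ X u = X v`, and `r (t+1) u v` iff
`r t u v` and for every `w`, `u` and `v` have equally many neighbors `z` with `r t z w`. -/
noncomputable def colorRefine {V F : Type*} (N : V → Finset V) (X : V → F) :
    ℕ → V → V → Prop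
  | 0 => fun u v => X u = X v
  | t + 1 => fun u v => colorRefine N X t u v ∧
      ∀ w, ((N u).filter fun z => colorRefine N X t z w).card =
           ((N v).filter fun z => colorRefine N X t z w).card


/-- Neighbor sets in the disjoint union of the graphs given by `A` and `B`. -/
noncomputable def sumNbrs {n : ℕ} (A B : Matrix (Fin n) (Fin n) ℝ) :
    Fin n ⊕ Fin n → Finset (Fin n ⊕ Fin n)
  | Sum.inl i => (nbrs A i).image Sum.inl
  | Sum.inr j => (nbrs B j).image Sum.inr

open Classical in
/-- Two featured graphs are 1-WL equivalent if every class of the stable color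
refinement relation `r (2n)` on their disjoint union contains exactly as many
left-side as right-side vertices. -/
noncomputable def WLEquiv {n d : ℕ} (G H : FeaturedGraph n d) : Prop :=
  ∀ w : Fin n ⊕ Fin n,
    (Finset.univ.filter fun i : Fin n =>
      colorRefine (sumNbrs G.A H.A) (Sum.elim G.X H.X) (2 * n) (Sum.inl i) w).card =
    (Finset.univ.filter fun j : Fin n =>
      colorRefine (sumNbrs G.A H.A) (Sum.elim G.X H.X) (2 * n) (Sum.inr j) w).card

/-- A stable partition of a featured graph: a partition of the vertices into
nonempty parts such that vertices in the same part have the same feature and the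
same number of neighbors in every part. -/
def IsStablePartition {n d k : ℕ} (G : FeaturedGraph n d) (P : Fin k → Finset (Fin n)) : Prop :=
  (∀ t, (P t).Nonempty) ∧ (∀ i : Fin n, ∃! t, i ∈ P t) ∧
    ∀ t, ∀ u ∈ P t, ∀ v ∈ P t, G.X u = G.X v ∧
      ∀ l, (nbrs G.A u ∩ P l).card = (nbrs G.A v ∩ P l).card

section CR
open Classical
variable {V F : Type*} (N : V → Finset V) (X : V → F)

lemma cr_succ (t : ℕ) (u v : V) : colorRefine N X (t+1) u v ↔
    (colorRefine N X t u v ∧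
      ∀ w, ((N u).filter fun z => colorRefine N X t z w).card =
           ((N v).filter fun z => colorRefine N X t z w).card) := by
  rw [colorRefine]

lemma cr_refl (t : ℕ) (u : V) : colorRefine N X t u u := by
  induction t with
  | zero => rw [colorRefine]
  | succ t ih => rw [cr_succ]; exact ⟨ih, fun _ => rfl⟩

lemma cr_symm {t : ℕ} {u v : V} (h : colorRefine N X t u v) : colorRefine N X t v u := by
  induction t with
  | zero => rw [colorRefine] at *; exact h.symm
  | succ t ih =>
    rw [cr_succ] at *
    exact ⟨ih h.1, fun w => (h.2 w).symm⟩

lemma cr_trans {t : ℕ} {u v w : V} (h : colorRefine N X t u v)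
    (h' : colorRefine N X t v w) : colorRefine N X t u w := by
  induction t with
  | zero => rw [colorRefine] at *; exact h.trans h'
  | succ t ih =>
    rw [cr_succ] at *
    exact ⟨ih h.1 h'.1, fun x => (h.2 x).trans (h'.2 x)⟩

lemma cr_of_succ {t : ℕ} {u v : V} (h : colorRefine N X (t+1) u v) :
    colorRefine N X t u v := ((cr_succ N X t u v).1 h).1

lemma cr_feat {t : ℕ} {u v : V} (h : colorRefine N X t u v) : X u = X v := by
  induction t with
  | zero => rw [colorRefine] at h; exact h
  | succ t ih => exact ih (cr_of_succ N X h)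

def CRStable (t : ℕ) : Prop :=
  ∀ u v, colorRefine N X (t+1) u v ↔ colorRefine N X t u v

lemma crStable_succ {t : ℕ} (h : CRStable N X t) : CRStable N X (t+1) := by
  intro u v
  constructor
  · exact cr_of_succ N X
  · intro huv
    rw [cr_succ]
    refine ⟨huv, fun w => ?_⟩
    have : ∀ x, ((N x).filter fun z => colorRefine N X (t+1) z w).card =
        ((N x).filter fun z => colorRefine N X t z w).card := by
      intro x
      congr 1
      apply Finset.filter_congr
      intro z _
      simp [h z w]
    rw [this u, this v]
    exact ((cr_succ N X t u v).1 huv).2 w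

lemma crStable_ge {t s : ℕ} (h : CRStable N X t) (hts : t ≤ s) : CRStable N X s := by
  induction s with
  | zero => exact Nat.le_zero.1 hts ▸ h
  | succ s ih =>
    rcases Nat.lt_or_ge t (s+1) with h' | h'
    · exact crStable_succ N X (ih (Nat.lt_succ_iff.1 h'))
    · exact (Nat.le_antisymm hts h') ▸ h

variable [Fintype V]

noncomputable def classAt (t : ℕ) (w : V) : Finset V :=
  Finset.univ.filter fun z => colorRefine N X t z w

lemma mem_classAt {t : ℕ} {z w : V} : z ∈ classAt N X t w ↔ colorRefine N X t z w := by
  simp [classAt]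

lemma classAt_eq_of_cr {t : ℕ} {u v : V} (h : colorRefine N X t u v) :
    classAt N X t u = classAt N X t v := by
  ext z
  simp only [mem_classAt]
  exact ⟨fun hz => cr_trans N X hz h, fun hz => cr_trans N X hz (cr_symm N X h)⟩

noncomputable def numClasses (t : ℕ) : ℕ := (Finset.univ.image (classAt N X t)).card

lemma numClasses_lt_of_not_stable {t : ℕ} (h : ¬ CRStable N X t) :
    numClasses N X t < numClasses N X (t+1) := by
  simp only [CRStable, not_forall] at h
  obtain ⟨u, v, huv⟩ := h
  have h1 : colorRefine N X t u v ∧ ¬ colorRefine N X (t+1) u v := by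
    by_cases h2 : colorRefine N X (t+1) u v
    · exact absurd (iff_of_true h2 (cr_of_succ N X h2)) huv
    · by_cases h3 : colorRefine N X t u v
      · exact ⟨h3, h2⟩
      · exact absurd (iff_of_false h2 h3) huv
  classical
  set f : Finset V → Finset V := fun S =>
    if hS : S.Nonempty then classAt N X t hS.choose else ∅ with hf
  have key : ∀ w, f (classAt N X (t+1) w) = classAt N X t w := by
    intro w
    have hne : (classAt N X (t+1) w).Nonempty := ⟨w, (mem_classAt N X).2 (cr_refl N X _ w)⟩
    rw [hf]
    simp only [dif_pos hne]
    have := hne.choose_spec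
    rw [mem_classAt] at this
    exact classAt_eq_of_cr N X (cr_of_succ N X this)
  set S1 : Finset (Finset V) := Finset.univ.image (classAt N X (t+1)) with hS1
  have himg : Finset.univ.image (classAt N X t) = S1.image f := by
    rw [hS1, Finset.image_image]
    apply Finset.image_congr
    intro w _
    exact (key w).symm
  have hane : classAt N X (t+1) u ≠ classAt N X (t+1) v := by
    intro he
    have : u ∈ classAt N X (t+1) v := he ▸ (mem_classAt N X).2 (cr_refl N X _ u)
    exact h1.2 ((mem_classAt N X).1 this)
  have haS : classAt N X (t+1) u ∈ S1 := Finset.mem_image_of_mem _ (Finset.mem_univ u)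
  have hbS : classAt N X (t+1) v ∈ S1 := Finset.mem_image_of_mem _ (Finset.mem_univ v)
  have hfab : f (classAt N X (t+1) u) = f (classAt N X (t+1) v) := by
    rw [key, key]; exact classAt_eq_of_cr N X h1.1
  have himg2 : S1.image f = (S1.erase (classAt N X (t+1) v)).image f := by
    apply Finset.Subset.antisymm
    · intro x hx
      rw [Finset.mem_image] at hx
      obtain ⟨s, hs, hsx⟩ := hx
      by_cases hsb : s = classAt N X (t+1) v
      · exact Finset.mem_image.2 ⟨classAt N X (t+1) u,
          Finset.mem_erase.2 ⟨hane, haS⟩, by rw [hfab, ← hsb, hsx]⟩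
      · exact Finset.mem_image.2 ⟨s, Finset.mem_erase.2 ⟨hsb, hs⟩, hsx⟩
    · exact Finset.image_subset_image (Finset.erase_subset _ _)
  calc numClasses N X t = ((S1.erase (classAt N X (t+1) v)).image f).card := by
        rw [numClasses, himg, himg2]
    _ ≤ (S1.erase (classAt N X (t+1) v)).card := Finset.card_image_le
    _ < S1.card := Finset.card_erase_lt_of_mem hbS
    _ = numClasses N X (t+1) := rfl

lemma crStable_card [Nonempty V] : CRStable N X (Fintype.card V) := by
  have aux : ∀ t : ℕ, (∃ s ≤ t, CRStable N X s) ∨ t + 1 ≤ numClasses N X t := by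
    intro t
    induction t with
    | zero =>
      right
      have : (Finset.univ.image (classAt N X 0)).Nonempty :=
        ⟨classAt N X 0 (Classical.arbitrary V), Finset.mem_image_of_mem _ (Finset.mem_univ _)⟩
      exact Finset.card_pos.2 this
    | succ t ih =>
      rcases ih with ⟨s, hs, hst⟩ | hc
      · exact Or.inl ⟨s, hs.trans (Nat.le_succ t), hst⟩
      · by_cases hst : CRStable N X t
        · exact Or.inl ⟨t, Nat.le_succ t, hst⟩
        · right
          have := numClasses_lt_of_not_stable N X hst
          omega
  rcases aux (Fintype.card V) with ⟨s, hs, hst⟩ | hc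
  · exact crStable_ge N X hst hs
  · have : numClasses N X (Fintype.card V) ≤ Fintype.card V := by
      calc numClasses N X (Fintype.card V) ≤ Finset.univ.card := Finset.card_image_le
        _ = Fintype.card V := Finset.card_univ
    omega

end CR

lemma filter_image_card {α β : Type*} [DecidableEq β] (f : α → β) (hf : Function.Injective f)
    (s : Finset α) (p : β → Prop) [DecidablePred p] :
    ((s.image f).filter p).card = (s.filter fun a => p (f a)).card := by
  classical
  have : (s.image f).filter p = (s.filter fun a => p (f a)).image f := by
    ext b
    simp only [Finset.mem_filter, Finset.mem_image]
    constructor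
    · rintro ⟨⟨a, ha, rfl⟩, hp⟩; exact ⟨a, ⟨ha, hp⟩, rfl⟩
    · rintro ⟨a, ⟨ha, hp⟩, rfl⟩; exact ⟨⟨a, ha, rfl⟩, hp⟩
  rw [this, Finset.card_image_of_injective _ hf]

/-- Two featured graphs are 1-WL equivalent iff they admit a common stable
partition. -/
theorem wlEquiv_iff_commonStablePartition {n d : ℕ} (G H : FeaturedGraph n d) :
    WLEquiv G H ↔
      ∃ (k : ℕ) (P Q : Fin k → Finset (Fin n)),
        IsStablePartition G P ∧ IsStablePartition H Q ∧
        (∀ t, (P t).card = (Q t).card) ∧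
        (∀ t, ∀ u ∈ P t, ∀ v ∈ Q t, G.X u = H.X v) ∧
        (∀ t l, ∀ u ∈ P t, ∀ v ∈ Q t,
          (nbrs G.A u ∩ P l).card = (nbrs H.A v ∩ Q l).card) := by
  classical
  set N := sumNbrs G.A H.A with hN
  set X := Sum.elim G.X H.X with hX
  rcases Nat.eq_zero_or_pos n with hn | hn
  · subst hn
    constructor
    · intro _
      refine ⟨0, Fin.elim0, Fin.elim0, ⟨fun t => t.elim0, fun i => i.elim0, fun t => t.elim0⟩,
        ⟨fun t => t.elim0, fun i => i.elim0, fun t => t.elim0⟩,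
        fun t => t.elim0, fun t => t.elim0, fun t => t.elim0⟩
    · intro _ w
      simp [Finset.filter_eq_empty_iff.2 (fun i _ => (Fin.elim0 i : False).elim)]
  have hne : Nonempty (Fin n ⊕ Fin n) := ⟨Sum.inl ⟨0, hn⟩⟩
  have hst : CRStable N X (2 * n) := by
    have h := crStable_card N X
    rwa [Fintype.card_sum, Fintype.card_fin, ← two_mul] at h
  constructor
  · -- forward
    intro hWL
    set S : Finset (Finset (Fin n ⊕ Fin n)) := Finset.univ.image (classAt N X (2 * n)) with hS
    set k := S.card with hk
    set cls : Fin k → Finset (Fin n ⊕ Fin n) := fun t => (S.equivFin.symm t : Finset _) with hcls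
    have cls_inj : Function.Injective cls := fun t t' h =>
      S.equivFin.symm.injective (Subtype.ext h)
    have cls_mem : ∀ t, cls t ∈ S := fun t => (S.equivFin.symm t).2
    have hrep : ∀ t, ∃ w, classAt N X (2 * n) w = cls t := by
      intro t
      obtain ⟨w, _, hw⟩ := Finset.mem_image.1 (cls_mem t)
      exact ⟨w, hw⟩
    choose w hw using hrep
    set P : Fin k → Finset (Fin n) :=
      fun t => Finset.univ.filter fun i => Sum.inl i ∈ cls t with hP
    set Q : Fin k → Finset (Fin n) :=
      fun t => Finset.univ.filter fun j => Sum.inr j ∈ cls t with hQ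
    have memP : ∀ t i, i ∈ P t ↔ colorRefine N X (2 * n) (Sum.inl i) (w t) := by
      intro t i
      rw [hP]
      simp only [Finset.mem_filter, Finset.mem_univ, true_and, ← hw t, mem_classAt]
    have memQ : ∀ t j, j ∈ Q t ↔ colorRefine N X (2 * n) (Sum.inr j) (w t) := by
      intro t j
      rw [hQ]
      simp only [Finset.mem_filter, Finset.mem_univ, true_and, ← hw t, mem_classAt]
    have hcard : ∀ t, (P t).card = (Q t).card := by
      intro t
      have h1 : P t = Finset.univ.filter fun i =>
          colorRefine N X (2 * n) (Sum.inl i) (w t) := by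
        ext i; rw [memP]; simp
      have h2 : Q t = Finset.univ.filter fun j =>
          colorRefine N X (2 * n) (Sum.inr j) (w t) := by
        ext j; rw [memQ]; simp
      rw [h1, h2]
      exact hWL (w t)
    -- existence and uniqueness of parts
    have huniqP : ∀ i : Fin n, ∃! t, i ∈ P t := by
      intro i
      have hcmem : classAt N X (2 * n) (Sum.inl i) ∈ S :=
        Finset.mem_image_of_mem _ (Finset.mem_univ _)
      set t0 := S.equivFin ⟨classAt N X (2 * n) (Sum.inl i), hcmem⟩ with ht0
      have hclst0 : cls t0 = classAt N X (2 * n) (Sum.inl i) := by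
        simp only [hcls, ht0, Equiv.symm_apply_apply]
      refine ⟨t0, ?_, ?_⟩
      · rw [hP]
        simp only [Finset.mem_filter, Finset.mem_univ, true_and, hclst0, mem_classAt]
        exact cr_refl N X _ _
      · intro t ht
        apply cls_inj
        rw [hclst0]
        rw [memP] at ht
        rw [← hw t]
        exact classAt_eq_of_cr N X (cr_symm N X ht)
    have huniqQ : ∀ j : Fin n, ∃! t, j ∈ Q t := by
      intro j
      have hcmem : classAt N X (2 * n) (Sum.inr j) ∈ S :=
        Finset.mem_image_of_mem _ (Finset.mem_univ _)
      set t0 := S.equivFin ⟨classAt N X (2 * n) (Sum.inr j), hcmem⟩ with ht0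
      have hclst0 : cls t0 = classAt N X (2 * n) (Sum.inr j) := by
        simp only [hcls, ht0, Equiv.symm_apply_apply]
      refine ⟨t0, ?_, ?_⟩
      · rw [hQ]
        simp only [Finset.mem_filter, Finset.mem_univ, true_and, hclst0, mem_classAt]
        exact cr_refl N X _ _
      · intro t ht
        apply cls_inj
        rw [hclst0]
        rw [memQ] at ht
        rw [← hw t]
        exact classAt_eq_of_cr N X (cr_symm N X ht)
    -- nonemptiness
    have hPne : ∀ t, (P t).Nonempty := by
      intro t
      have hwt : w t ∈ cls t := by
        rw [← hw t, mem_classAt]; exact cr_refl N X _ _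
      rcases hwtc : w t with i | j
      · exact ⟨i, by rw [memP, ← hwtc]; exact cr_refl N X _ _⟩
      · have : j ∈ Q t := by rw [memQ, ← hwtc]; exact cr_refl N X _ _
        have : 0 < (Q t).card := Finset.card_pos.2 ⟨j, this⟩
        rw [← hcard t] at this
        exact Finset.card_pos.1 this
    have hQne : ∀ t, (Q t).Nonempty := by
      intro t
      have := hPne t
      rw [← Finset.card_pos, hcard t, Finset.card_pos] at this
      exact this
    -- neighbor count helpers
    have hNl : ∀ (i : Fin n) (l : Fin k),
        ((N (Sum.inl i)).filter fun z => colorRefine N X (2 * n) z (w l)).card =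
          (nbrs G.A i ∩ P l).card := by
      intro i l
      have h1 : N (Sum.inl i) = (nbrs G.A i).image Sum.inl := by rw [hN]; rfl
      rw [h1, filter_image_card Sum.inl Sum.inl_injective]
      congr 1
      ext a
      simp only [Finset.mem_filter, Finset.mem_inter]
      rw [memP, and_comm]
    have hNr : ∀ (j : Fin n) (l : Fin k),
        ((N (Sum.inr j)).filter fun z => colorRefine N X (2 * n) z (w l)).card =
          (nbrs H.A j ∩ Q l).card := by
      intro j l
      have h1 : N (Sum.inr j) = (nbrs H.A j).image Sum.inr := by rw [hN]; rfl
      rw [h1, filter_image_card Sum.inr Sum.inr_injective]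
      congr 1
      ext a
      simp only [Finset.mem_filter, Finset.mem_inter]
      rw [memQ, and_comm]
    -- colorRefine between same-part vertices
    have crPP : ∀ t, ∀ u ∈ P t, ∀ v ∈ P t,
        colorRefine N X (2 * n) (Sum.inl u) (Sum.inl v) := by
      intro t u hu v hv
      rw [memP] at hu hv
      exact cr_trans N X hu (cr_symm N X hv)
    have crPQ : ∀ t, ∀ u ∈ P t, ∀ v ∈ Q t,
        colorRefine N X (2 * n) (Sum.inl u) (Sum.inr v) := by
      intro t u hu v hv
      rw [memP] at hu
      rw [memQ] at hv
      exact cr_trans N X hu (cr_symm N X hv)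
    have crQQ : ∀ t, ∀ u ∈ Q t, ∀ v ∈ Q t,
        colorRefine N X (2 * n) (Sum.inr u) (Sum.inr v) := by
      intro t u hu v hv
      rw [memQ] at hu hv
      exact cr_trans N X hu (cr_symm N X hv)
    refine ⟨k, P, Q, ⟨hPne, huniqP, ?_⟩, ⟨hQne, huniqQ, ?_⟩, hcard, ?_, ?_⟩
    · intro t u hu v hv
      have hcr := crPP t u hu v hv
      constructor
      · have := cr_feat N X hcr
        rw [hX] at this
        simpa using this
      · intro l
        have hcr1 : colorRefine N X (2 * n + 1) (Sum.inl u) (Sum.inl v) :=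
          (hst _ _).2 hcr
        have := ((cr_succ N X (2 * n) _ _).1 hcr1).2 (w l)
        rwa [hNl u l, hNl v l] at this
    · intro t u hu v hv
      have hcr := crQQ t u hu v hv
      constructor
      · have := cr_feat N X hcr
        rw [hX] at this
        simpa using this
      · intro l
        have hcr1 : colorRefine N X (2 * n + 1) (Sum.inr u) (Sum.inr v) :=
          (hst _ _).2 hcr
        have := ((cr_succ N X (2 * n) _ _).1 hcr1).2 (w l)
        rwa [hNr u l, hNr v l] at this
    · intro t u hu v hv
      have := cr_feat N X (crPQ t u hu v hv)
      rw [hX] at this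
      simpa using this
    · intro t l u hu v hv
      have hcr1 : colorRefine N X (2 * n + 1) (Sum.inl u) (Sum.inr v) :=
        (hst _ _).2 (crPQ t u hu v hv)
      have := ((cr_succ N X (2 * n) _ _).1 hcr1).2 (w l)
      rwa [hNl u l, hNr v l] at this
  · -- backward
    rintro ⟨k, P, Q, ⟨hPne, hPuniq, hPstab⟩, ⟨hQne, hQuniq, hQstab⟩, hcard, hfeat, hnbr⟩
    choose pL hpL hpLuniq using hPuniq
    choose pR hpR hpRuniq using hQuniq
    set C : Fin k → Finset (Fin n ⊕ Fin n) :=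
      fun l => (P l).image Sum.inl ∪ (Q l).image Sum.inr with hC
    have memCl : ∀ l i, Sum.inl i ∈ C l ↔ i ∈ P l := by
      intro l i; rw [hC]; simp
    have memCr : ∀ l j, Sum.inr j ∈ C l ↔ j ∈ Q l := by
      intro l j; rw [hC]; simp
    set pt : Fin n ⊕ Fin n → Fin k := Sum.elim pL pR with hpt
    have hptC : ∀ z, z ∈ C (pt z) := by
      intro z
      rcases z with i | j
      · rw [hpt]; simp only [Sum.elim_inl]; rw [memCl]; exact hpL i
      · rw [hpt]; simp only [Sum.elim_inr]; rw [memCr]; exact hpR j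
    have hptuniq : ∀ z l, z ∈ C l → l = pt z := by
      intro z l hz
      rcases z with i | j
      · rw [memCl] at hz; rw [hpt]; simpa using hpLuniq i l hz
      · rw [memCr] at hz; rw [hpt]; simpa using hpRuniq j l hz
    -- key induction: same part implies colorRefine at every step
    have key : ∀ s : ℕ, ∀ l, ∀ u ∈ C l, ∀ v ∈ C l, colorRefine N X s u v := by
      intro s
      induction s with
      | zero =>
        intro l u hu v hv
        rw [colorRefine]
        rcases u with i | j <;> rcases v with i' | j'
        · rw [memCl] at hu hv
          rw [hX]; simpa using (hPstab l i hu i' hv).1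
        · rw [memCl] at hu
          rw [memCr] at hv
          rw [hX]; simpa using hfeat l i hu j' hv
        · rw [memCr] at hu
          rw [memCl] at hv
          rw [hX]; simpa using (hfeat l i' hv j hu).symm
        · rw [memCr] at hu hv
          rw [hX]; simpa using (hQstab l j hu j' hv).1
      | succ s ih =>
        intro l u hu v hv
        rw [cr_succ]
        refine ⟨ih l u hu v hv, fun w0 => ?_⟩
        -- the filtered neighborhood count, decomposed over parts
        have hconst : ∀ m, ∀ z ∈ C m, ∀ z' ∈ C m,
            (colorRefine N X s z w0 ↔ colorRefine N X s z' w0) := by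
          intro m z hz z' hz'
          exact ⟨fun h => cr_trans N X (ih m z' hz' z hz) h,
                 fun h => cr_trans N X (ih m z hz z' hz') h⟩
        have count : ∀ x : Fin n ⊕ Fin n,
            ((N x).filter fun z => colorRefine N X s z w0).card =
              ∑ m : Fin k, if (∃ z₀ ∈ C m, colorRefine N X s z₀ w0)
                then ((N x).filter fun z => pt z = m).card else 0 := by
          intro x
          rw [Finset.card_eq_sum_card_fiberwise
            (f := pt) (t := Finset.univ) (fun z _ => Finset.mem_univ _)]
          apply Finset.sum_congr rfl
          intro m _
          rw [Finset.filter_filter]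
          by_cases hq : ∃ z₀ ∈ C m, colorRefine N X s z₀ w0
          · rw [if_pos hq]
            obtain ⟨z₀, hz₀, hz₀w⟩ := hq
            congr 1
            apply Finset.filter_congr
            intro z _
            constructor
            · rintro ⟨_, h⟩; exact h
            · intro h
              refine ⟨?_, h⟩
              have : z ∈ C m := h ▸ hptC z
              exact (hconst m z this z₀ hz₀).2 hz₀w
          · rw [if_neg hq]
            convert Finset.card_empty
            rw [Finset.filter_eq_empty_iff]
            rintro z _ ⟨hzw, hzm⟩
            exact hq ⟨z, hzm ▸ hptC z, hzw⟩
        -- counts within a part are equal for same-part vertices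
        have partcount : ∀ m, ((N u).filter fun z => pt z = m).card =
            ((N v).filter fun z => pt z = m).card := by
          intro m
          have lcount : ∀ i : Fin n, ((N (Sum.inl i)).filter fun z => pt z = m).card =
              (nbrs G.A i ∩ P m).card := by
            intro i
            have h1 : N (Sum.inl i) = (nbrs G.A i).image Sum.inl := by rw [hN]; rfl
            rw [h1, filter_image_card Sum.inl Sum.inl_injective]
            congr 1
            ext a
            simp only [Finset.mem_filter, Finset.mem_inter]
            have : pt (Sum.inl a) = pL a := by rw [hpt]; simp
            rw [this]
            constructor
            · rintro ⟨ha, rfl⟩; exact ⟨ha, hpL a⟩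
            · rintro ⟨ha, hm⟩; exact ⟨ha, (hpLuniq a m hm).symm⟩
          have rcount : ∀ j : Fin n, ((N (Sum.inr j)).filter fun z => pt z = m).card =
              (nbrs H.A j ∩ Q m).card := by
            intro j
            have h1 : N (Sum.inr j) = (nbrs H.A j).image Sum.inr := by rw [hN]; rfl
            rw [h1, filter_image_card Sum.inr Sum.inr_injective]
            congr 1
            ext a
            simp only [Finset.mem_filter, Finset.mem_inter]
            have : pt (Sum.inr a) = pR a := by rw [hpt]; simp
            rw [this]
            constructor
            · rintro ⟨ha, rfl⟩; exact ⟨ha, hpR a⟩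
            · rintro ⟨ha, hm⟩; exact ⟨ha, (hpRuniq a m hm).symm⟩
          rcases u with i | j <;> rcases v with i' | j'
          · rw [lcount i, lcount i']
            rw [memCl] at hu hv
            exact (hPstab l i hu i' hv).2 m
          · rw [lcount i, rcount j']
            rw [memCl] at hu
            rw [memCr] at hv
            exact hnbr l m i hu j' hv
          · rw [rcount j, lcount i']
            rw [memCr] at hu
            rw [memCl] at hv
            exact (hnbr l m i' hv j hu).symm
          · rw [rcount j, rcount j']
            rw [memCr] at hu hv
            exact (hQstab l j hu j' hv).2 m
        rw [count u, count v]
        apply Finset.sum_congr rfl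
        intro m _
        by_cases hq : ∃ z₀ ∈ C m, colorRefine N X s z₀ w0
        · rw [if_pos hq, if_pos hq]; exact partcount m
        · rw [if_neg hq, if_neg hq]
    -- conclude WLEquiv
    intro w0
    have lsum : (Finset.univ.filter fun i : Fin n =>
        colorRefine N X (2 * n) (Sum.inl i) w0).card =
        ∑ m : Fin k, if (∃ z₀ ∈ C m, colorRefine N X (2 * n) z₀ w0)
          then (P m).card else 0 := by
      rw [Finset.card_eq_sum_card_fiberwise
        (f := pL) (t := Finset.univ) (fun z _ => Finset.mem_univ _)]
      apply Finset.sum_congr rfl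
      intro m _
      rw [Finset.filter_filter]
      by_cases hq : ∃ z₀ ∈ C m, colorRefine N X (2 * n) z₀ w0
      · rw [if_pos hq]
        obtain ⟨z₀, hz₀, hz₀w⟩ := hq
        congr 1
        ext i
        simp only [Finset.mem_filter, Finset.mem_univ, true_and]
        constructor
        · rintro ⟨_, rfl⟩; exact hpL i
        · intro hi
          have hCi : Sum.inl i ∈ C m := (memCl m i).2 hi
          exact ⟨cr_trans N X (key (2 * n) m _ hCi _ hz₀) hz₀w, (hpLuniq i m hi).symm⟩
      · rw [if_neg hq]
        convert Finset.card_empty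
        rw [Finset.filter_eq_empty_iff]
        rintro i _ ⟨hiw, him⟩
        exact hq ⟨Sum.inl i, (memCl m i).2 (him ▸ hpL i), hiw⟩
    have rsum : (Finset.univ.filter fun j : Fin n =>
        colorRefine N X (2 * n) (Sum.inr j) w0).card =
        ∑ m : Fin k, if (∃ z₀ ∈ C m, colorRefine N X (2 * n) z₀ w0)
          then (Q m).card else 0 := by
      rw [Finset.card_eq_sum_card_fiberwise
        (f := pR) (t := Finset.univ) (fun z _ => Finset.mem_univ _)]
      apply Finset.sum_congr rfl
      intro m _
      rw [Finset.filter_filter]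
      by_cases hq : ∃ z₀ ∈ C m, colorRefine N X (2 * n) z₀ w0
      · rw [if_pos hq]
        obtain ⟨z₀, hz₀, hz₀w⟩ := hq
        congr 1
        ext j
        simp only [Finset.mem_filter, Finset.mem_univ, true_and]
        constructor
        · rintro ⟨_, rfl⟩; exact hpR j
        · intro hj
          have hCj : Sum.inr j ∈ C m := (memCr m j).2 hj
          exact ⟨cr_trans N X (key (2 * n) m _ hCj _ hz₀) hz₀w, (hpRuniq j m hj).symm⟩
      · rw [if_neg hq]
        convert Finset.card_empty
        rw [Finset.filter_eq_empty_iff]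
        rintro j _ ⟨hjw, hjm⟩
        exact hq ⟨Sum.inr j, (memCr m j).2 (hjm ▸ hpR j), hjw⟩
    rw [lsum, rsum]
    apply Finset.sum_congr rfl
    intro m _
    by_cases hq : ∃ z₀ ∈ C m, colorRefine N X (2 * n) z₀ w0
    · rw [if_pos hq, if_pos hq]; exact hcard m
    · rw [if_neg hq, if_neg hq]
end
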